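/- Lax pairs and first integrals (Corollary): Take K = ℝ and assume A is finite-dimensional over ℝ, equipped with a norm making it a normed ℝ-algebra. Let x, y ∈ Γ with x even, and let X, Y : ℝ → Matrix (Fin N) (Fin N) A be such that X t ∈ M^x(w) and Y t ∈ M^y(w) for every t ∈ ℝ, and such that for all t, α, β the entry function s ↦ X s α β has at t the derivative ((X t) * (Y t) − sign(x,y) • ((Y t) * (X t))) α β (graded commutator equation dX/dt = [X,Y]). Then for every k ≥ 1 the function t ↦ Γtr_{k·x}((X t)^k) is constant on ℝ, where k·x denotes the k-fold sum x + ⋯ + x in Γ (equal to x if k is odd and to 0 if k is even). -/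

import Mathlib

open Matrix

abbrev Gamma (n : ℕ) := Fin n → ZMod 2

def gpair {n : ℕ} (γ δ : Gamma n) : ZMod 2 := ∑ i, γ i * δ i

def gsign {n : ℕ} (γ δ : Gamma n) : ℤ := if gpair γ δ = 1 then -1 else 1

def GammaEven {n : ℕ} (γ : Gamma n) : Prop := gpair γ γ = 0

instance {n : ℕ} : DecidablePred (GammaEven (n := n)) := fun γ =>
  inferInstanceAs (Decidable (gpair γ γ = 0))

/-- `Γ`-graded commutativity of the graded algebra `A`:
`b * a = sign(γ,δ) • (a * b)` for homogeneous `a, b`. -/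
def GradedComm {n : ℕ} {K A : Type*} [Field K] [Ring A] [Algebra K A]
    (𝒜 : Gamma n → Submodule K A) : Prop :=
  ∀ (γ δ : Gamma n) (a b : A), a ∈ 𝒜 γ → b ∈ 𝒜 δ → b * a = gsign γ δ • (a * b)

/-- `X ∈ M^x(w)` : the matrix `X` is homogeneous of degree `x` w.r.t. the weight map `w`. -/
def Mdeg {n : ℕ} {K A : Type*} [Field K] [Ring A] [Algebra K A]
    (𝒜 : Gamma n → Submodule K A) {ι : Type*} (w : ι → Gamma n) (x : Gamma n)
    (X : Matrix ι ι A) : Prop :=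
  ∀ α β, X α β ∈ 𝒜 (w α + w β + x)

/-- `X ∈ M⁰(w)` : the matrix `X` is homogeneous of degree `0` w.r.t. the weight map `w`. -/
def Mdeg0 {n : ℕ} {K A : Type*} [Field K] [Ring A] [Algebra K A]
    (𝒜 : Gamma n → Submodule K A) {ι : Type*} (w : ι → Gamma n)
    (X : Matrix ι ι A) : Prop :=
  ∀ α β, X α β ∈ 𝒜 (w α + w β)

/-- The graded trace of a homogeneous matrix `X` of degree `x`:
`Γtr_x(X) = ∑ α, sign(w α + x, w α) • X α α`. -/
def gtr {n : ℕ} {ι : Type*} [Fintype ι] {A : Type*} [Ring A]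
    (w : ι → Gamma n) (x : Gamma n) (X : Matrix ι ι A) : A :=
  ∑ α, gsign (w α + x) (w α) • X α α

/-! ### Auxiliary lemmas -/

private lemma gadd_self {n : ℕ} (γ : Gamma n) : γ + γ = 0 := by
  funext i
  have h : ∀ c : ZMod 2, c + c = 0 := by decide
  exact h (γ i)

private lemma gpair_zero_right {n : ℕ} (γ : Gamma n) : gpair γ 0 = 0 := by
  simp [gpair]

private lemma gsign_zero_right {n : ℕ} (γ : Gamma n) : gsign γ 0 = 1 := by
  rw [gsign, gpair_zero_right]
  decide

private lemma if_sign_mul (c d : ZMod 2) :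
    (if c = 1 then (-1 : ℤ) else 1) * (if d = 1 then (-1 : ℤ) else 1)
      = if c + d = 1 then (-1 : ℤ) else 1 := by
  revert c d; decide

private lemma gsign_sq {n : ℕ} (γ δ : Gamma n) : gsign γ δ * gsign γ δ = 1 := by
  unfold gsign; split <;> norm_num

private lemma gpair_identity {n : ℕ} (a b u v : Gamma n) :
    gpair (a + (u + v)) a + gpair (a + b + u) (b + a + v)
      = gpair u v + gpair (b + (u + v)) b := by
  unfold gpair
  rw [← Finset.sum_add_distrib, ← Finset.sum_add_distrib]
  refine Finset.sum_congr rfl fun i _ => ?_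
  have h : ∀ p q r s : ZMod 2,
      (p + (r + s)) * p + (p + q + r) * (q + p + s) = r * s + (q + (r + s)) * q := by decide
  exact h (a i) (b i) (u i) (v i)

private lemma gsign_identity {n : ℕ} (a b u v : Gamma n) :
    gsign (a + (u + v)) a * gsign (a + b + u) (b + a + v)
      = gsign u v * gsign (b + (u + v)) b := by
  unfold gsign
  rw [if_sign_mul, if_sign_mul, gpair_identity]

private lemma gtr_sub {n N : ℕ} {A : Type*} [Ring A] (w : Fin N → Gamma n) (z : Gamma n)
    (P Q : Matrix (Fin N) (Fin N) A) : gtr w z (P - Q) = gtr w z P - gtr w z Q := by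
  simp [gtr, Matrix.sub_apply, smul_sub, Finset.sum_sub_distrib]

private lemma gtr_sum {n N : ℕ} {A : Type*} [Ring A] (w : Fin N → Gamma n) (z : Gamma n)
    {J : Type*} (s : Finset J) (f : J → Matrix (Fin N) (Fin N) A) :
    gtr w z (∑ j ∈ s, f j) = ∑ j ∈ s, gtr w z (f j) := by
  unfold gtr
  simp only [Matrix.sum_apply, Finset.smul_sum]
  rw [Finset.sum_comm]

section MdegLemmas

variable {n N : ℕ} {A : Type*} [Ring A] [Algebra ℝ A]
  (𝒜 : Gamma n → Submodule ℝ A) (w : Fin N → Gamma n)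

private lemma Mdeg_congr {u v : Gamma n} {U : Matrix (Fin N) (Fin N) A}
    (h : u = v) (hU : Mdeg 𝒜 w u U) : Mdeg 𝒜 w v U := h ▸ hU

private lemma Mdeg_mul [GradedAlgebra 𝒜] {u v : Gamma n} {U V : Matrix (Fin N) (Fin N) A}
    (hU : Mdeg 𝒜 w u U) (hV : Mdeg 𝒜 w v V) : Mdeg 𝒜 w (u + v) (U * V) := by
  intro α β
  rw [Matrix.mul_apply]
  refine Submodule.sum_mem _ fun γ _ => ?_
  have h := SetLike.mul_mem_graded (hU α γ) (hV γ β)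
  have he : (w α + w γ + u) + (w γ + w β + v) = w α + w β + (u + v) := by
    have h2 := gadd_self (w γ)
    calc (w α + w γ + u) + (w γ + w β + v)
        = (w γ + w γ) + (w α + w β + (u + v)) := by abel
      _ = w α + w β + (u + v) := by rw [h2, zero_add]
  rwa [he] at h

private lemma Mdeg_one [GradedAlgebra 𝒜] : Mdeg 𝒜 w 0 (1 : Matrix (Fin N) (Fin N) A) := by
  intro α β
  by_cases h : α = β
  · subst h
    rw [Matrix.one_apply_eq]
    have he : w α + w α + 0 = 0 := by rw [add_zero, gadd_self]
    rw [he]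
    exact SetLike.one_mem_graded 𝒜
  · rw [Matrix.one_apply_ne h]
    exact zero_mem _

private lemma Mdeg_pow [GradedAlgebra 𝒜] {x : Gamma n} {U : Matrix (Fin N) (Fin N) A}
    (hU : Mdeg 𝒜 w x U) (k : ℕ) : Mdeg 𝒜 w (k • x) (U ^ k) := by
  induction k with
  | zero => rw [pow_zero, zero_smul]; exact Mdeg_one 𝒜 w
  | succ k ih =>
    rw [pow_succ, succ_nsmul]
    exact Mdeg_mul 𝒜 w ih hU

private lemma Mdeg_sub {u : Gamma n} {U V : Matrix (Fin N) (Fin N) A}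
    (hU : Mdeg 𝒜 w u U) (hV : Mdeg 𝒜 w u V) : Mdeg 𝒜 w u (U - V) := fun α β => by
  rw [Matrix.sub_apply]; exact sub_mem (hU α β) (hV α β)

private lemma Mdeg_zsmul {u : Gamma n} {U : Matrix (Fin N) (Fin N) A} (c : ℤ)
    (hU : Mdeg 𝒜 w u U) : Mdeg 𝒜 w u (c • U) := fun α β => by
  rw [Matrix.smul_apply]; exact zsmul_mem (hU α β) c

end MdegLemmas

/-- Cyclicity of the graded trace on matching degrees. -/
private lemma gtr_cyclic {n N : ℕ} {A : Type*} [Ring A] [Algebra ℝ A]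
    (𝒜 : Gamma n → Submodule ℝ A) (hcomm : GradedComm 𝒜)
    (w : Fin N → Gamma n) (u v : Gamma n) (U V : Matrix (Fin N) (Fin N) A)
    (hU : Mdeg 𝒜 w u U) (hV : Mdeg 𝒜 w v V) :
    gtr w (u + v) (U * V) = gsign u v • gtr w (u + v) (V * U) := by
  unfold gtr
  rw [Finset.smul_sum]
  calc ∑ α, gsign (w α + (u + v)) (w α) • (U * V) α α
      = ∑ α, ∑ β, (gsign (w α + (u + v)) (w α)
          * gsign (w α + w β + u) (w β + w α + v)) • (V β α * U α β) := by
        refine Finset.sum_congr rfl fun α _ => ?_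
        rw [Matrix.mul_apply, Finset.smul_sum]
        refine Finset.sum_congr rfl fun β _ => ?_
        have hswap : U α β * V β α
            = gsign (w α + w β + u) (w β + w α + v) • (V β α * U α β) := by
          have h := hcomm _ _ _ _ (hU α β) (hV β α)
          rw [h, smul_smul, gsign_sq, one_smul]
        rw [hswap, smul_smul]
    _ = ∑ β, ∑ α, (gsign u v * gsign (w β + (u + v)) (w β)) • (V β α * U α β) := by
        rw [Finset.sum_comm]
        exact Finset.sum_congr rfl fun β _ => Finset.sum_congr rfl fun α _ => by
          rw [gsign_identity]
    _ = ∑ β, gsign u v • (gsign (w β + (u + v)) (w β) • (V * U) β β) := by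
        refine Finset.sum_congr rfl fun β _ => ?_
        rw [Matrix.mul_apply, Finset.smul_sum, Finset.smul_sum]
        refine Finset.sum_congr rfl fun α _ => ?_
        rw [smul_smul]

/-- **Lax pairs and first integrals** (Corollary).
If `X(t) ∈ M^x(w)` with `x` even satisfies the Lax equation `dX/dt = [X, Y]` with
`Y(t) ∈ M^y(w)`, then all the graded traces `Γtr((X t)^k)`, `k ≥ 1`, are independent
of `t`. -/
theorem lax_first_integrals {n N : ℕ} (hn : 1 ≤ n) (hN : 1 ≤ N)
    {A : Type*} [NormedRing A] [NormedAlgebra ℝ A] [FiniteDimensional ℝ A]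
    (𝒜 : Gamma n → Submodule ℝ A) [GradedAlgebra 𝒜] (hcomm : GradedComm 𝒜)
    (w : Fin N → Gamma n) (x y : Gamma n) (hx : GammaEven x)
    (X Y : ℝ → Matrix (Fin N) (Fin N) A)
    (hX : ∀ t, Mdeg 𝒜 w x (X t)) (hY : ∀ t, Mdeg 𝒜 w y (Y t))
    (hder : ∀ (t : ℝ) (α β : Fin N), HasDerivAt (fun s => X s α β)
      ((X t * Y t - gsign x y • (Y t * X t)) α β) t) :
    ∀ k : ℕ, 1 ≤ k → ∀ t₁ t₂ : ℝ,
      gtr w (k • x) (X t₁ ^ k) = gtr w (k • x) (X t₂ ^ k) := by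
  intro k hk t₁ t₂
  -- the "commutator" matrix
  have hDdeg : ∀ t, Mdeg 𝒜 w (x + y) (X t * Y t - gsign x y • (Y t * X t)) := by
    intro t
    refine Mdeg_sub 𝒜 w (Mdeg_mul 𝒜 w (hX t) (hY t)) (Mdeg_zsmul 𝒜 w _ ?_)
    exact Mdeg_congr 𝒜 w (add_comm y x) (Mdeg_mul 𝒜 w (hY t) (hX t))
  by_cases hy : y = 0
  · -- case y = 0 : telescoping and cyclic trace
    subst hy
    -- derivative of entries of powers of X
    have hpow : ∀ (m : ℕ) (t : ℝ) (α β : Fin N),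
        HasDerivAt (fun s => (X s ^ m) α β)
          ((∑ j ∈ Finset.range m, X t ^ j * (X t * Y t - gsign x 0 • (Y t * X t))
              * X t ^ (m - 1 - j)) α β) t := by
      intro m
      induction m with
      | zero =>
        intro t α β
        simp only [pow_zero, Finset.range_zero, Finset.sum_empty, Matrix.zero_apply]
        exact hasDerivAt_const t _
      | succ m ih =>
        intro t α β
        have hmat : (∑ j ∈ Finset.range (m + 1),
              X t ^ j * (X t * Y t - gsign x 0 • (Y t * X t)) * X t ^ (m + 1 - 1 - j))
            = (∑ j ∈ Finset.range m,
                X t ^ j * (X t * Y t - gsign x 0 • (Y t * X t)) * X t ^ (m - 1 - j)) * X t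
              + X t ^ m * (X t * Y t - gsign x 0 • (Y t * X t)) := by
          simp only [Nat.add_sub_cancel]
          rw [Finset.sum_range_succ, Nat.sub_self, pow_zero, mul_one, Finset.sum_mul]
          congr 1
          refine Finset.sum_congr rfl fun j hj => ?_
          have hj' : j < m := Finset.mem_range.mp hj
          rw [show m - j = (m - 1 - j) + 1 by omega, pow_succ, ← mul_assoc]
        rw [hmat]
        have h := HasDerivAt.fun_sum (𝕜 := ℝ)
          (fun γ (_ : γ ∈ Finset.univ) => (ih t α γ).mul (hder t γ β))
        have hent : ((∑ j ∈ Finset.range m,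
              X t ^ j * (X t * Y t - gsign x 0 • (Y t * X t)) * X t ^ (m - 1 - j)) * X t
              + X t ^ m * (X t * Y t - gsign x 0 • (Y t * X t))) α β
            = ∑ γ, ((∑ j ∈ Finset.range m, X t ^ j * (X t * Y t - gsign x 0 • (Y t * X t))
                  * X t ^ (m - 1 - j)) α γ * X t γ β
                + (X t ^ m) α γ * (X t * Y t - gsign x 0 • (Y t * X t)) γ β) := by
          simp [Matrix.add_apply, Matrix.mul_apply, Finset.sum_add_distrib]
        rw [hent]
        have hfun : (fun s => (X s ^ (m + 1)) α β)
            = fun s => ∑ γ, (X s ^ m) α γ * X s γ β := by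
          funext s
          rw [pow_succ, Matrix.mul_apply]
        rw [hfun]
        exact h
    -- derivative of the graded trace
    have hg : ∀ t, HasDerivAt (fun s => gtr w (k • x) (X s ^ k))
        (gtr w (k • x) (∑ j ∈ Finset.range k,
          X t ^ j * (X t * Y t - gsign x 0 • (Y t * X t)) * X t ^ (k - 1 - j))) t := by
      intro t
      unfold gtr
      exact HasDerivAt.fun_sum fun α _ => (hpow k t α α).fun_const_smul _
    -- the derivative is zero
    have hzero : ∀ t, gtr w (k • x) (∑ j ∈ Finset.range k,
        X t ^ j * (X t * Y t - gsign x 0 • (Y t * X t)) * X t ^ (k - 1 - j)) = 0 := by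
      intro t
      have hσ : gsign x (0 : Gamma n) = 1 := gsign_zero_right x
      have hterm : ∀ j ∈ Finset.range k,
          X t ^ j * (X t * Y t - gsign x 0 • (Y t * X t)) * X t ^ (k - 1 - j)
            = X t ^ (j + 1) * Y t * X t ^ (k - (j + 1)) - X t ^ j * Y t * X t ^ (k - j) := by
        intro j hj
        have hj' : j < k := Finset.mem_range.mp hj
        rw [hσ, one_smul]
        rw [show k - (j + 1) = k - 1 - j by omega, show k - j = (k - 1 - j) + 1 by omega,
          pow_succ, pow_succ']
        noncomm_ring
      rw [Finset.sum_congr rfl hterm, gtr_sum]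
      simp only [gtr_sub]
      have htel : ∑ j ∈ Finset.range k,
          (gtr w (k • x) (X t ^ (j + 1) * Y t * X t ^ (k - (j + 1)))
            - gtr w (k • x) (X t ^ j * Y t * X t ^ (k - j)))
          = gtr w (k • x) (X t ^ k * Y t * X t ^ (k - k))
            - gtr w (k • x) (X t ^ 0 * Y t * X t ^ (k - 0)) :=
        Finset.sum_range_sub (fun m => gtr w (k • x) (X t ^ m * Y t * X t ^ (k - m))) k
      rw [htel]
      simp only [Nat.sub_self, Nat.sub_zero, pow_zero, mul_one, one_mul]
      have hcyc := gtr_cyclic 𝒜 hcomm w (k • x) 0 (X t ^ k) (Y t)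
        (Mdeg_pow 𝒜 w (hX t) k) (hY t)
      rw [add_zero, gsign_zero_right, one_smul] at hcyc
      rw [hcyc, sub_self]
    have hconst : ∀ t, HasDerivAt (fun s => gtr w (k • x) (X s ^ k)) 0 t := by
      intro t
      have h := hg t
      rwa [hzero t] at h
    exact is_const_of_deriv_eq_zero (fun t => (hconst t).differentiableAt)
      (fun t => (hconst t).deriv) t₁ t₂
  · -- case y ≠ 0 : the entries of X are constant
    have hXconst : X t₁ = X t₂ := by
      ext α β
      have hkey : ∀ t, (X t * Y t - gsign x y • (Y t * X t)) α β = 0 := by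
        intro t
        have hmem2 : (X t * Y t - gsign x y • (Y t * X t)) α β ∈ 𝒜 (w α + w β + (x + y)) :=
          hDdeg t α β
        have hclosed : IsClosed ((𝒜 (w α + w β + x) : Submodule ℝ A) : Set A) :=
          Submodule.closed_of_finiteDimensional _
        have hmem1 : (X t * Y t - gsign x y • (Y t * X t)) α β ∈ 𝒜 (w α + w β + x) := by
          refine hclosed.mem_of_tendsto (hasDerivAt_iff_tendsto_slope.mp (hder t α β)) ?_
          refine Filter.Eventually.of_forall fun s => ?_
          rw [slope_def_module]
          exact Submodule.smul_mem _ _ (sub_mem (hX s α β) (hX t α β))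
        have hne : w α + w β + x ≠ w α + w β + (x + y) := by
          intro h
          apply hy
          exact left_eq_add.mp (add_left_cancel h)
        have h1 := DirectSum.decompose_of_mem_ne 𝒜 hmem1 hne
        have h2 := DirectSum.decompose_of_mem_same 𝒜 hmem2
        rw [h1] at h2
        simpa using h2.symm
      have hcd : ∀ t, HasDerivAt (fun s => X s α β) 0 t := by
        intro t
        have h := hder t α β
        rwa [hkey t] at h
      exact is_const_of_deriv_eq_zero (fun t => (hcd t).differentiableAt)
        (fun t => (hcd t).deriv) t₁ t₂
    rw [hXconst]
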